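/- Let D = ⟨x, y | x^(2^r) = y^(2^r) = [x,y]^2 = [x,[x,y]] = [y,[x,y]] = 1⟩ with r ≥ 2. Then the map determined by x ↦ y, y ↦ x⁻¹y⁻¹ extends to an automorphism of D of order 3. -/

import Mathlib

open scoped commutatorElement

/-- The generator `x` of the free group on two letters. -/
def gx : FreeGroup (Fin 2) := FreeGroup.of 0

/-- The generator `y` of the free group on two letters. -/
def gy : FreeGroup (Fin 2) := FreeGroup.of 1

/-- The relations of the Rédei presentation with parameters `r`, `s`:
`x^(2^r)`, `y^(2^s)`, `⁅x,y⁆^2`, `⁅x,⁅x,y⁆⁆`, `⁅y,⁅x,y⁆⁆`,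
where `⁅a,b⁆ = a*b*a⁻¹*b⁻¹`. -/
def redeiRels (r s : ℕ) : Set (FreeGroup (Fin 2)) :=
  {gx ^ (2 ^ r), gy ^ (2 ^ s), ⁅gx, gy⁆ ^ 2, ⁅gx, ⁅gx, gy⁆⁆, ⁅gy, ⁅gx, gy⁆⁆}

/-- The Rédei group `⟨x,y ∣ x^(2^r) = y^(2^s) = [x,y]^2 = [x,[x,y]] = [y,[x,y]] = 1⟩`. -/
abbrev RedeiGroup (r s : ℕ) := PresentedGroup (redeiRels r s)

/-- The image of the generator `x` in the Rédei group. -/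
def Dx (r s : ℕ) : RedeiGroup r s := PresentedGroup.of 0

/-- The image of the generator `y` in the Rédei group. -/
def Dy (r s : ℕ) : RedeiGroup r s := PresentedGroup.of 1

/-- The element `z = [x,y]` of the Rédei group. -/
def Dz (r s : ℕ) : RedeiGroup r s := ⁅Dx r s, Dy r s⁆

/-- Auxiliary: if `b * a = a * b * c` with `c` commuting with `a` and `b`, then
`b ^ n * a = a * b ^ n * c ^ n`. -/
lemma aux_pow_comm {G : Type*} [Group G] {a b c : G} (h : b * a = a * b * c)
    (hcb : Commute c b) : ∀ n : ℕ, b ^ n * a = a * b ^ n * c ^ n := by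
  intro n
  induction n with
  | zero => simp
  | succ n ih =>
    have hcb' : c ^ n * b = b * c ^ n := (hcb.pow_left n).eq
    calc b ^ (n + 1) * a = b ^ n * (b * a) := by rw [pow_succ']; group
      _ = b ^ n * (a * b * c) := by rw [h]
      _ = (b ^ n * a) * b * c := by group
      _ = (a * b ^ n * c ^ n) * b * c := by rw [ih]
      _ = a * b ^ n * (c ^ n * b) * c := by group
      _ = a * b ^ n * (b * c ^ n) * c := by rw [hcb']
      _ = a * b ^ (n + 1) * c ^ (n + 1) := by rw [pow_succ, pow_succ]; group

/-- Auxiliary: if `b * a = a * b * c` with `c` commuting with `a` and `b`, then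
`(a * b) ^ n = a ^ n * b ^ n * c ^ (n.choose 2)`. -/
lemma aux_mul_pow {G : Type*} [Group G] {a b c : G} (h : b * a = a * b * c)
    (hca : Commute c a) (hcb : Commute c b) :
    ∀ n : ℕ, (a * b) ^ n = a ^ n * b ^ n * c ^ (n.choose 2) := by
  intro n
  induction n with
  | zero => simp
  | succ n ih =>
    have hC : (n + 1).choose 2 = n.choose 2 + n := by
      rw [Nat.choose_succ_succ]
      simp [Nat.choose_one_right, Nat.add_comm]
    have hcomm : (c ^ n.choose 2) * (a * b) = (a * b) * (c ^ n.choose 2) :=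
      ((hca.mul_right hcb).pow_left _).eq
    calc (a * b) ^ (n + 1) = (a * b) ^ n * (a * b) := by rw [pow_succ]
      _ = a ^ n * b ^ n * c ^ n.choose 2 * (a * b) := by rw [ih]
      _ = a ^ n * b ^ n * (a * b) * c ^ n.choose 2 := by
          rw [mul_assoc, hcomm, ← mul_assoc]
      _ = a ^ n * (b ^ n * a) * b * c ^ n.choose 2 := by group
      _ = a ^ n * (a * b ^ n * c ^ n) * b * c ^ n.choose 2 := by
          rw [aux_pow_comm h hcb]
      _ = a ^ (n + 1) * b ^ n * (c ^ n * b) * c ^ n.choose 2 := by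
          rw [pow_succ']; group
      _ = a ^ (n + 1) * b ^ n * (b * c ^ n) * c ^ n.choose 2 := by
          rw [(hcb.pow_left n).eq]
      _ = a ^ (n + 1) * b ^ (n + 1) * c ^ ((n + 1).choose 2) := by
          rw [hC, pow_add, pow_succ]; group

/-- All relations hold in the Rédei group. -/
lemma redei_rel_holds {r s : ℕ} {w : FreeGroup (Fin 2)} (hw : w ∈ redeiRels r s) :
    PresentedGroup.mk (redeiRels r s) w = 1 := by
  have : w ∈ Subgroup.normalClosure (redeiRels r s) := Subgroup.subset_normalClosure hw
  exact (QuotientGroup.eq_one_iff w).2 this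

lemma Dx_pow (r s : ℕ) : (Dx r s) ^ (2 ^ r) = 1 := by
  have := redei_rel_holds (r := r) (s := s) (w := gx ^ (2 ^ r)) (by left; rfl)
  rwa [map_pow] at this

lemma Dy_pow (r s : ℕ) : (Dy r s) ^ (2 ^ s) = 1 := by
  have := redei_rel_holds (r := r) (s := s) (w := gy ^ (2 ^ s))
    (by right; left; rfl)
  rwa [map_pow] at this

lemma Dz_sq (r s : ℕ) : (Dz r s) ^ 2 = 1 := by
  have := redei_rel_holds (r := r) (s := s) (w := ⁅gx, gy⁆ ^ 2)
    (by right; right; left; rfl)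
  rwa [map_pow, map_commutatorElement] at this

lemma Dx_comm_Dz (r s : ℕ) : Commute (Dx r s) (Dz r s) := by
  have := redei_rel_holds (r := r) (s := s) (w := ⁅gx, ⁅gx, gy⁆⁆)
    (by right; right; right; left; rfl)
  rw [map_commutatorElement, map_commutatorElement] at this
  exact commutatorElement_eq_one_iff_commute.1 this

lemma Dy_comm_Dz (r s : ℕ) : Commute (Dy r s) (Dz r s) := by
  have := redei_rel_holds (r := r) (s := s) (w := ⁅gy, ⁅gx, gy⁆⁆)
    (by right; right; right; right; rfl)
  rw [map_commutatorElement, map_commutatorElement] at this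
  exact commutatorElement_eq_one_iff_commute.1 this

theorem stmt7 (r : ℕ) (hr : 2 ≤ r) :
    ∃ α : MulAut (RedeiGroup r r),
      α (Dx r r) = Dy r r ∧ α (Dy r r) = (Dx r r)⁻¹ * (Dy r r)⁻¹ ∧
      orderOf α = 3 := by
  set X := Dx r r with hXdef
  set Y := Dy r r with hYdef
  set z := Dz r r with hzdef
  have hX : X ^ (2 ^ r) = 1 := Dx_pow r r
  have hY : Y ^ (2 ^ r) = 1 := Dy_pow r r
  have hz2 : z ^ 2 = 1 := Dz_sq r r
  have hXz : Commute X z := Dx_comm_Dz r r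
  have hYz : Commute Y z := Dy_comm_Dz r r
  have hzc : z = X * Y * X⁻¹ * Y⁻¹ := by rw [hzdef, Dz, commutatorElement_def]
  -- basic commutation rule
  have h1 : Y⁻¹ * X⁻¹ = X⁻¹ * Y⁻¹ * z⁻¹ := by rw [hzc]; group
  -- the commutator of the images of the generators is z
  have key : ⁅Y, X⁻¹ * Y⁻¹⁆ = z := by
    have h2 : Y * X⁻¹ = X⁻¹ * (z * Y) := by
      have h3 : X * Y = z * (Y * X) := by rw [hzc]; group
      calc Y * X⁻¹ = X⁻¹ * (X * Y) * X⁻¹ := by group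
        _ = X⁻¹ * (z * (Y * X)) * X⁻¹ := by rw [h3]
        _ = X⁻¹ * (z * Y) := by group
    calc ⁅Y, X⁻¹ * Y⁻¹⁆ = (Y * X⁻¹) * Y⁻¹ * X := by
          rw [commutatorElement_def]; group
      _ = (X⁻¹ * (z * Y)) * Y⁻¹ * X := by rw [h2]
      _ = X⁻¹ * (z * X) := by group
      _ = X⁻¹ * (X * z) := by rw [hXz.symm.eq]
      _ = z := by group
  -- the choose number is even
  obtain ⟨k, hk⟩ : ∃ k, (2 ^ r).choose 2 = 2 * k := by
    obtain ⟨m, hm⟩ : ∃ m, 2 ^ r = 4 * m := ⟨2 ^ (r - 2), by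
      calc 2 ^ r = 2 ^ (2 + (r - 2)) := by congr 1; omega
        _ = 4 * 2 ^ (r - 2) := by rw [pow_add]; norm_num⟩
    refine ⟨m * (4 * m - 1), ?_⟩
    rw [Nat.choose_two_right, hm]
    have h4 : 4 * m * (4 * m - 1) = 2 * (2 * (m * (4 * m - 1))) := by
      cases m with
      | zero => rfl
      | succ p => ring_nf
    rw [h4, Nat.mul_div_cancel_left _ (by norm_num)]
  -- the image of y^(2^r) is 1
  have hB : (X⁻¹ * Y⁻¹) ^ (2 ^ r) = 1 := by
    have := aux_mul_pow h1 hXz.symm.inv_left.inv_right hYz.symm.inv_left.inv_right (2 ^ r)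
    rw [this, inv_pow, inv_pow, hX, hY, hk, pow_mul, inv_pow, hz2]
    simp
  have hzinv : z⁻¹ = z := by
    have : z * z = 1 := by rw [← pow_two]; exact hz2
    rw [inv_eq_iff_mul_eq_one, this]
  -- z commutes with X⁻¹ * Y⁻¹
  have hXYz : Commute (X⁻¹ * Y⁻¹) z := (hXz.inv_left).mul_left (hYz.inv_left)
  -- the map on generators
  set f : Fin 2 → RedeiGroup r r := ![Y, X⁻¹ * Y⁻¹] with hfdef
  have hf0 : f 0 = Y := rfl
  have hf1 : f 1 = X⁻¹ * Y⁻¹ := rfl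
  have hliftx : FreeGroup.lift f gx = Y := by rw [gx, FreeGroup.lift_apply_of, hf0]
  have hlifty : FreeGroup.lift f gy = X⁻¹ * Y⁻¹ := by rw [gy, FreeGroup.lift_apply_of, hf1]
  have hrel : ∀ w ∈ redeiRels r r, FreeGroup.lift f w = 1 := by
    intro w hw
    rcases hw with h | h | h | h | h
    · rw [h, map_pow, hliftx, hY]
    · rw [h, map_pow, hlifty, hB]
    · rw [h, map_pow, map_commutatorElement, hliftx, hlifty, key, hz2]
    · rw [h, map_commutatorElement, map_commutatorElement, hliftx, hlifty, key]
      exact commutatorElement_eq_one_iff_commute.2 hYz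
    · rw [h, map_commutatorElement, map_commutatorElement, hliftx, hlifty, key]
      exact commutatorElement_eq_one_iff_commute.2 hXYz
  set φ : RedeiGroup r r →* RedeiGroup r r := PresentedGroup.toGroup hrel with hφdef
  have hφX : φ X = Y := by rw [hXdef, Dx]; exact PresentedGroup.toGroup.of hrel
  have hφY : φ Y = X⁻¹ * Y⁻¹ := by rw [hYdef, Dy]; exact PresentedGroup.toGroup.of hrel
  have hφXY : φ (X⁻¹ * Y⁻¹) = X := by
    rw [map_mul, map_inv, map_inv, hφX, hφY]
    group
  -- φ ∘ φ ∘ φ = id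
  have hφ3 : ∀ g, φ (φ (φ g)) = g := by
    have : ((φ.comp φ).comp φ) = MonoidHom.id _ := by
      apply PresentedGroup.ext
      intro i
      fin_cases i
      · show φ (φ (φ X)) = X
        rw [hφX, hφY, hφXY]
      · show φ (φ (φ Y)) = Y
        rw [hφY, hφXY, hφX]
    intro g
    exact DFunLike.congr_fun this g
  -- build the automorphism
  set α : MulAut (RedeiGroup r r) :=
    { toFun := φ
      invFun := fun g => φ (φ g)
      left_inv := fun g => hφ3 g
      right_inv := fun g => hφ3 g
      map_mul' := map_mul φ } with hαdef
  have hαapp : ∀ g, α g = φ g := fun g => rfl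
  refine ⟨α, by rw [hαapp, hφX], by rw [hαapp, hφY], ?_⟩
  -- order 3
  have hα3 : α ^ 3 = 1 := by
    ext g
    show (α ^ 3) g = g
    rw [pow_succ, pow_succ, pow_one, MulAut.mul_apply, MulAut.mul_apply]
    exact hφ3 g
  -- Dx ≠ Dy, via the abelianization map to (ZMod 2)²
  have hXY : X ≠ Y := by
    set V := Multiplicative (ZMod 2 × ZMod 2) with hV
    set ψf : Fin 2 → V := ![Multiplicative.ofAdd (1, 0), Multiplicative.ofAdd (0, 1)]
      with hψf
    have hVsq : ∀ v : V, v ^ (2 ^ r) = 1 := by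
      intro v
      have h2 : (2 : ℕ) ^ r = 2 * 2 ^ (r - 1) := by
        rw [← pow_succ']; congr 1; omega
      rw [h2, pow_mul]
      have hv2 : v ^ 2 = 1 := by revert v; decide
      rw [hv2, one_pow]
    have hψrel : ∀ w ∈ redeiRels r r, FreeGroup.lift ψf w = 1 := by
      intro w hw
      rcases hw with h | h | h | h | h
      · rw [h, map_pow]; exact hVsq _
      · rw [h, map_pow]; exact hVsq _
      · rw [h, map_pow, map_commutatorElement,
          commutatorElement_eq_one_iff_commute.2 (Commute.all _ _), one_pow]
      · rw [h, map_commutatorElement,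
          commutatorElement_eq_one_iff_commute.2 (Commute.all _ _)]
      · rw [h, map_commutatorElement,
          commutatorElement_eq_one_iff_commute.2 (Commute.all _ _)]
    set ψ : RedeiGroup r r →* V := PresentedGroup.toGroup hψrel with hψdef
    intro hEq
    have h1 : ψ X = Multiplicative.ofAdd (1, 0) := by
      rw [hXdef, Dx]; exact PresentedGroup.toGroup.of hψrel
    have h2 : ψ Y = Multiplicative.ofAdd (0, 1) := by
      rw [hYdef, Dy]; exact PresentedGroup.toGroup.of hψrel
    rw [hEq, h2] at h1
    exact absurd (Multiplicative.ofAdd.injective h1) (by decide)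
  have hαne : α ≠ 1 := by
    intro h
    apply hXY
    have := DFunLike.congr_fun h X
    rw [hαapp, hφX] at this
    exact this.symm ▸ rfl
  have : orderOf α = 3 := by
    have : Fact (Nat.Prime 3) := ⟨by norm_num⟩
    exact orderOf_eq_prime hα3 hαne
  exact this
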